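/- arXiv:2510.01599 — 2 statements merged into one kernel-verified Lean document; each statement's English description precedes it below -/
import Mathlib

section
/- Let μ be a Borel probability measure on ℝ with finite first moment, and define Call(K) := ∫ max(x−K, 0) μ(dx). If μ({K}) = 0 for some K ∈ ℝ, then Call is differentiable at K with Call'(K) = −μ([K,∞)) = −μ((K,∞)). -/
open MeasureTheory Filter

theorem stmt9 (μ : Measure ℝ) [IsProbabilityMeasure μ]
    (hμ1 : Integrable (fun x => |x|) μ)
    (Call : ℝ → ℝ) (hCall : ∀ K : ℝ, Call K = ∫ x, max (x - K) 0 ∂μ)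
    (K : ℝ) (hK : μ {K} = 0) :
    HasDerivAt Call (-(μ (Set.Ici K)).toReal) K ∧
    μ (Set.Ici K) = μ (Set.Ioi K) := by
  have hIciIoi : μ (Set.Ici K) = μ (Set.Ioi K) := by
    have h1 : Set.Ici K \ {K} = Set.Ioi K := by
      ext x
      simp only [Set.mem_diff, Set.mem_Ici, Set.mem_singleton_iff, Set.mem_Ioi]
      constructor
      · rintro ⟨h, h2⟩; exact lt_of_le_of_ne h (Ne.symm h2)
      · intro h; exact ⟨le_of_lt h, ne_of_gt h⟩
    rw [← h1, measure_diff_null hK]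
  -- integrability of max functions
  have hint : ∀ y : ℝ, Integrable (fun x => max (x - y) 0) μ := by
    intro y
    refine (hμ1.add (integrable_const |y|)).mono' ?_ ?_
    · exact ((continuous_id.sub continuous_const).max continuous_const).aestronglyMeasurable
    · filter_upwards with x
      rw [Real.norm_eq_abs]
      have h1 : |max (x - y) 0| ≤ |x - y| := by
        have := abs_max_sub_max_le_abs (x - y) 0 0
        simpa using this
      calc |max (x - y) 0| ≤ |x - y| := h1
        _ ≤ |x| + |y| := abs_sub x y
  set g : ℝ → ℝ := Set.indicator (Set.Ioi K) (fun _ => (-1 : ℝ)) with hg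
  have hgint : ∫ x, g x ∂μ = -(μ (Set.Ici K)).toReal := by
    rw [hg, integral_indicator_const _ measurableSet_Ioi, hIciIoi]
    simp [mul_comm, Measure.real]
  have key : Tendsto (fun y => ∫ x, (y - K)⁻¹ * (max (x - y) 0 - max (x - K) 0) ∂μ)
      (nhdsWithin K {K}ᶜ) (nhds (∫ x, g x ∂μ)) := by
    apply tendsto_integral_filter_of_dominated_convergence (fun _ => (1 : ℝ))
    · filter_upwards with y
      exact (continuous_const.mul (((continuous_id.sub continuous_const).max
        continuous_const).sub ((continuous_id.sub continuous_const).max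
        continuous_const))).aestronglyMeasurable
    · filter_upwards [self_mem_nhdsWithin] with y hy
      filter_upwards with x
      have hyK : y ≠ K := hy
      rw [Real.norm_eq_abs, abs_mul, abs_inv]
      have h1 : |max (x - y) 0 - max (x - K) 0| ≤ |y - K| := by
        have := abs_max_sub_max_le_abs (x - y) (x - K) 0
        calc |max (x - y) 0 - max (x - K) 0| ≤ |(x - y) - (x - K)| := this
          _ = |y - K| := by rw [abs_sub_comm]; ring_nf
      have hpos : 0 < |y - K| := abs_pos.mpr (sub_ne_zero.mpr hyK)
      calc |y - K|⁻¹ * |max (x - y) 0 - max (x - K) 0| ≤ |y - K|⁻¹ * |y - K| := by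
            exact mul_le_mul_of_nonneg_left h1 (inv_nonneg.mpr (abs_nonneg _))
        _ = 1 := inv_mul_cancel₀ (ne_of_gt hpos)
    · exact integrable_const 1
    · have hxK : ∀ᵐ x ∂μ, x ≠ K := by
        rw [ae_iff]
        convert hK using 2
        ext x; simp
      filter_upwards [hxK] with x hx
      rcases lt_or_gt_of_ne hx with hlt | hgt
      · -- x < K : eventually 0
        have hg0 : g x = 0 := by
          rw [hg, Set.indicator_of_notMem]
          simp [Set.mem_Ioi]; linarith
        rw [hg0]
        have hev : ∀ᶠ y in nhdsWithin K {K}ᶜ,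
            (y - K)⁻¹ * (max (x - y) 0 - max (x - K) 0) = 0 := by
          have : ∀ᶠ y in nhds K, |y - K| < K - x := eventually_abs_sub_lt K (by linarith)
          filter_upwards [nhdsWithin_le_nhds this] with y hy
          have hxy : x - y ≤ 0 := by
            have := abs_lt.mp hy
            linarith [this.1]
          have hxK' : x - K ≤ 0 := by linarith
          rw [max_eq_right hxy, max_eq_right hxK']
          ring
        exact Tendsto.congr' (hev.mono fun y h => h.symm) tendsto_const_nhds
      · -- x > K : eventually -1
        have hg1 : g x = -1 := by
          rw [hg, Set.indicator_of_mem]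
          exact hgt
        rw [hg1]
        have hev : ∀ᶠ y in nhdsWithin K {K}ᶜ,
            (y - K)⁻¹ * (max (x - y) 0 - max (x - K) 0) = -1 := by
          have h1 : ∀ᶠ y in nhds K, |y - K| < x - K := eventually_abs_sub_lt K (by linarith)
          filter_upwards [nhdsWithin_le_nhds h1, self_mem_nhdsWithin] with y hy hy'
          have hyK : y ≠ K := hy'
          have hxy : 0 ≤ x - y := by
            have := abs_lt.mp hy
            linarith [this.2]
          have hxK' : 0 ≤ x - K := by linarith
          rw [max_eq_left hxy, max_eq_left hxK']
          have hne : y - K ≠ 0 := sub_ne_zero.mpr hyK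
          field_simp
          ring
        exact Tendsto.congr' (hev.mono fun y h => h.symm) tendsto_const_nhds
  have hslope : ∀ᶠ y in nhdsWithin K {K}ᶜ,
      (fun y => ∫ x, (y - K)⁻¹ * (max (x - y) 0 - max (x - K) 0) ∂μ) y = slope Call K y := by
    filter_upwards [self_mem_nhdsWithin] with y hy
    rw [slope_def_field, hCall y, hCall K, div_eq_inv_mul, ← integral_sub (hint y) (hint K),
      ← integral_const_mul]
  have hderiv : HasDerivAt Call (-(μ (Set.Ici K)).toReal) K := by
    rw [hasDerivAt_iff_tendsto_slope]
    rw [← hgint]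
    exact Tendsto.congr' hslope key
  exact ⟨hderiv, hIciIoi⟩
end

section
/- Let μ be a Borel probability measure on ℝ with finite first moment, and define Call(K) := ∫ max(x−K, 0) μ(dx). Then for every twice continuously differentiable function g : ℝ → ℝ with compact support, ∫_ℝ g''(K) · Call(K) dK = ∫_ℝ g(x) μ(dx). That is, the second distributional derivative of the call price function with respect to the strike is the measure μ. -/
open MeasureTheory

lemma stmt10_inner (g : ℝ → ℝ) (hg : ContDiff ℝ 2 g) (hgc : HasCompactSupport g) (x : ℝ) :
    ∫ K : ℝ, deriv (deriv g) K * max (x - K) 0 = g x := by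
  have h2 : ContDiff ℝ (1 + 1) g := by norm_num; exact hg
  obtain ⟨hdg, -, hg1⟩ := contDiff_succ_iff_deriv.mp h2
  have hdg' : Differentiable ℝ (deriv g) := hg1.differentiable one_ne_zero
  have hc2 : Continuous (deriv (deriv g)) := (contDiff_one_iff_deriv.mp hg1).2
  obtain ⟨R, hR⟩ := hgc.isBounded.subset_closedBall 0
  set a : ℝ := min (-R - 1) x with ha
  have hax : a ≤ x := min_le_right _ _
  have hnot : ∀ K : ℝ, K ≤ a → K ∉ tsupport g := by
    intro K hK hmem
    have := hR hmem
    rw [Metric.mem_closedBall, Real.dist_eq, sub_zero] at this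
    have : -R ≤ K := neg_le_of_abs_le this
    have : K ≤ -R - 1 := le_trans hK (min_le_left _ _)
    linarith
  have hg0 : ∀ K : ℝ, K ≤ a → g K = 0 := fun K hK =>
    image_eq_zero_of_notMem_tsupport (hnot K hK)
  have tsub : ∀ f : ℝ → ℝ, tsupport (deriv f) ⊆ tsupport f := fun f =>
    closure_minimal support_deriv_subset isClosed_closure
  have hg0' : ∀ K : ℝ, K ≤ a → deriv g K = 0 := fun K hK =>
    image_eq_zero_of_notMem_tsupport (fun h => hnot K hK (tsub g h))
  have hg0'' : ∀ K : ℝ, K ≤ a → deriv (deriv g) K = 0 := fun K hK =>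
    image_eq_zero_of_notMem_tsupport
      (fun h => hnot K hK (tsub g (tsub (deriv g) h)))
  rw [← setIntegral_eq_integral_of_forall_compl_eq_zero (s := Set.Ioc a x) (by
    intro K hK
    rcases not_and_or.mp hK with h | h
    · rw [hg0'' K (le_of_not_gt h), zero_mul]
    · rw [max_eq_right (by push_neg at h; linarith), mul_zero])]
  rw [← intervalIntegral.integral_of_le hax]
  rw [intervalIntegral.integral_congr (g := fun K => deriv (deriv g) K * (x - K)) (by
    intro K hK
    rw [Set.uIcc_of_le hax] at hK
    show deriv (deriv g) K * max (x - K) 0 = deriv (deriv g) K * (x - K)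
    rw [max_eq_left (by linarith [hK.2])])]
  have hFTC := intervalIntegral.integral_eq_sub_of_hasDerivAt
    (f := fun K => deriv g K * (x - K) + g K)
    (f' := fun K => deriv (deriv g) K * (x - K))
    (a := a) (b := x)
    (fun K _ => by
      have h1 : HasDerivAt (deriv g) (deriv (deriv g) K) K := (hdg' K).hasDerivAt
      have h2' : HasDerivAt (fun K => x - K) (-1) K := (hasDerivAt_id K).const_sub x
      have h3 := (h1.mul h2').add (hdg K).hasDerivAt
      convert h3 using 1
      · rfl
      ring)
    ((hc2.mul (continuous_const.sub continuous_id)).intervalIntegrable a x)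
  rw [hFTC]
  simp [hg0 a le_rfl, hg0' a le_rfl]

theorem stmt10 (μ : Measure ℝ) [IsProbabilityMeasure μ]
    (hμ1 : Integrable (fun x => |x|) μ)
    (Call : ℝ → ℝ) (hCall : ∀ K : ℝ, Call K = ∫ x, max (x - K) 0 ∂μ) :
    ∀ g : ℝ → ℝ, ContDiff ℝ 2 g → HasCompactSupport g →
      ∫ K : ℝ, deriv (deriv g) K * Call K = ∫ x, g x ∂μ := by
  intro g hg hgc
  have h2 : ContDiff ℝ (1 + 1) g := by norm_num; exact hg
  obtain ⟨hdg, -, hg1⟩ := contDiff_succ_iff_deriv.mp h2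
  have hc2 : Continuous (deriv (deriv g)) := (contDiff_one_iff_deriv.mp hg1).2
  have hcs2 : HasCompactSupport (deriv (deriv g)) := hgc.deriv.deriv
  obtain ⟨C, hC⟩ := hcs2.exists_bound_of_continuous hc2
  have hC0 : 0 ≤ C := le_trans (norm_nonneg _) (hC 0)
  obtain ⟨R, hR⟩ := hcs2.isBounded.subset_closedBall 0
  have hR0 : 0 ≤ R ⊔ 0 := le_max_right _ _
  set s : Set ℝ := Metric.closedBall 0 (R ⊔ 0) with hs
  have hRs : tsupport (deriv (deriv g)) ⊆ s := hR.trans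
    (Metric.closedBall_subset_closedBall (le_max_left _ _))
  have hFint : Integrable (Function.uncurry
      (fun K x => deriv (deriv g) K * max (x - K) 0)) (volume.prod μ) := by
    have hBint : Integrable (fun p : ℝ × ℝ =>
        (s.indicator (fun _ => C) p.1) * (|p.2| + (R ⊔ 0))) (volume.prod μ) := by
      have hf1 : Integrable (s.indicator (fun _ => C)) (volume : Measure ℝ) := by
        rw [integrable_indicator_iff measurableSet_closedBall]
        exact (integrableOn_const_iff (C := C)).mpr (Or.inr (by
          simpa using (isCompact_closedBall (0:ℝ) _).measure_lt_top (μ := volume)))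
      have hf2 : Integrable (fun x : ℝ => |x| + (R ⊔ 0)) μ := hμ1.add (integrable_const _)
      exact hf1.mul_prod hf2
    apply Integrable.mono' hBint
    · exact ((hc2.comp continuous_fst).mul
        (((continuous_snd.sub continuous_fst).max continuous_const))).aestronglyMeasurable
    · apply ae_of_all
      rintro ⟨K, x⟩
      simp only [Function.uncurry, Real.norm_eq_abs]
      by_cases hKs : K ∈ s
      · rw [Set.indicator_of_mem hKs]
        have hKR : |K| ≤ R ⊔ 0 := by
          have := Metric.mem_closedBall.mp hKs
          rwa [Real.dist_eq, sub_zero] at this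
        have h1 : |deriv (deriv g) K| ≤ C := hC K
        have h2' : |max (x - K) 0| ≤ |x| + (R ⊔ 0) := by
          rw [abs_of_nonneg (le_max_right _ _)]
          calc max (x - K) 0 ≤ |x - K| := max_le (le_abs_self _) (abs_nonneg _)
            _ ≤ |x| + |K| := abs_sub _ _
            _ ≤ |x| + (R ⊔ 0) := by linarith
        calc |deriv (deriv g) K * max (x - K) 0| = |deriv (deriv g) K| * |max (x - K) 0| :=
              abs_mul _ _
          _ ≤ C * (|x| + (R ⊔ 0)) := by
              apply mul_le_mul h1 h2' (abs_nonneg _) hC0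
      · rw [Set.indicator_of_notMem hKs, zero_mul]
        have : deriv (deriv g) K = 0 :=
          image_eq_zero_of_notMem_tsupport (fun h => hKs (hRs h))
        simp [this]
  have step1 : ∀ K : ℝ, deriv (deriv g) K * Call K
      = ∫ x, deriv (deriv g) K * max (x - K) 0 ∂μ := by
    intro K
    rw [hCall, integral_const_mul]
  simp_rw [step1]
  rw [integral_integral_swap hFint]
  exact integral_congr_ae (ae_of_all _ fun x => stmt10_inner g hg hgc x)
end
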